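/- Let Δ be a finite simple graph and let S be a subset of its vertex set, with Δ[S] the induced subgraph of Δ on S. Then the group homomorphism G(Δ[S]) → G(Δ) sending each generator of G(Δ[S]) to the corresponding generator of G(Δ) is injective. -/

import Mathlib

/-- The set of relators of the right-angled Artin group of a simple graph:
commutators of generators corresponding to adjacent vertices. -/
def raagRels {V : Type*} (G : SimpleGraph V) : Set (FreeGroup V) :=
  {r | ∃ a b : V, G.Adj a b ∧
    r = FreeGroup.of a * FreeGroup.of b * (FreeGroup.of a)⁻¹ * (FreeGroup.of b)⁻¹}

/-- The right-angled Artin group of a simple graph. -/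
abbrev RAAG {V : Type*} (G : SimpleGraph V) : Type _ :=
  PresentedGroup (raagRels G)

/-- The generator of the right-angled Artin group corresponding to a vertex. -/
def raagGen {V : Type*} (G : SimpleGraph V) (v : V) : RAAG G :=
  PresentedGroup.of v

lemma raag_comm {V : Type*} {G : SimpleGraph V} {a b : V} (h : G.Adj a b) :
    raagGen G a * raagGen G b * (raagGen G a)⁻¹ * (raagGen G b)⁻¹ = 1 := by
  have : (FreeGroup.of a * FreeGroup.of b * (FreeGroup.of a)⁻¹ * (FreeGroup.of b)⁻¹ : FreeGroup V)
      ∈ Subgroup.normalClosure (raagRels G) :=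
    Subgroup.subset_normalClosure ⟨a, b, h, rfl⟩
  have := (QuotientGroup.eq_one_iff _).2 this
  exact this

theorem raag_induce_injective {V : Type*} [Fintype V] (Δ : SimpleGraph V) (S : Set V)
    (φ : RAAG (Δ.induce S) →* RAAG Δ)
    (hφ : ∀ s : S, φ (raagGen (Δ.induce S) s) = raagGen Δ ↑s) :
    Function.Injective φ := by
  classical
  set f : V → RAAG (Δ.induce S) := fun v =>
    if h : v ∈ S then raagGen (Δ.induce S) ⟨v, h⟩ else 1 with hf
  have hrel : ∀ r ∈ raagRels Δ, FreeGroup.lift f r = 1 := by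
    rintro r ⟨a, b, hab, rfl⟩
    simp only [map_mul, map_inv, FreeGroup.lift_apply_of]
    by_cases ha : a ∈ S
    · by_cases hb : b ∈ S
      · simp only [hf, dif_pos ha, dif_pos hb]
        exact raag_comm (by exact hab : (Δ.induce S).Adj ⟨a, ha⟩ ⟨b, hb⟩)
      · simp [hf, dif_pos ha, dif_neg hb]
    · simp [hf, dif_neg ha]
  let ψ : RAAG Δ →* RAAG (Δ.induce S) := PresentedGroup.toGroup hrel
  have hretr : ∀ x, ψ (φ x) = x := by
    have : ψ.comp φ = MonoidHom.id _ := by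
      apply PresentedGroup.ext
      intro x
      have : φ (raagGen (Δ.induce S) x) = raagGen Δ ↑x := hφ x
      simp only [MonoidHom.comp_apply, MonoidHom.id_apply]
      show ψ (φ (raagGen (Δ.induce S) x)) = _
      rw [this]
      show ψ (PresentedGroup.of (↑x : V)) = _
      rw [PresentedGroup.toGroup.of]
      simp [f, x.2, raagGen]
    intro x
    exact DFunLike.congr_fun this x
  exact Function.LeftInverse.injective hretr
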